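/- arXiv:2105.04550 — 2 statements merged into one kernel-verified Lean document; each statement's English description precedes it below -/
import Mathlib

section
/- For any differentiable loss ℓ: ℝ^{m_y×n̄} → ℝ, along any gradient flow trajectory of L(W,B) = ℓ(f(X,W,B)_{*I}) for an H-layer (non-multiscale) linear GNN, for all t ≥ 0: d/dt L(W_t,B_t) = −‖vec[V_t (X(S^H)_{*I})ᵀ]‖²_{F_{(H),t}} − Σ_{i=1}^H ‖J_{(i,H),t} vec[V_t (X(S^H)_{*I})ᵀ]‖₂², where V_t is the derivative of ℓ at the network output f(X,W_t,B_t)_{*I}. -/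
open Matrix
open scoped Kronecker

noncomputable section

/-- Squared Frobenius norm of a real matrix. -/
def frobSq {α β : Type*} [Fintype α] [Fintype β] (M : Matrix α β ℝ) : ℝ :=
  ∑ i, ∑ j, (M i j) ^ 2

/-- Squared Euclidean norm of a vector. -/
def vecNormSq {α : Type*} [Fintype α] (v : α → ℝ) : ℝ := ∑ i, (v i) ^ 2

/-- Quadratic form `vᵀ M v` (Mahalanobis-type square "norm" `‖v‖_M²`). -/
def quadForm {α : Type*} [Fintype α] (M : Matrix α α ℝ) (v : α → ℝ) : ℝ :=
  v ⬝ᵥ M.mulVec v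

/-- Column-stacking vectorization of a matrix: `vecM M (j, i) = M i j`. -/
def vecM {α β : Type*} (M : Matrix α β ℝ) : β × α → ℝ := fun p => M p.2 p.1

/-- Smallest (real) eigenvalue of a square matrix, as infimum of its eigenvalue set. -/
def lambdaMin {α : Type*} [Fintype α] (A : Matrix α α ℝ) : ℝ :=
  sInf {r : ℝ | ∃ v : α → ℝ, v ≠ 0 ∧ A.mulVec v = r • v}

/-- The `min(#rows, #cols)`-th largest singular value of a matrix. -/
def sigmaMin {α β : Type*} [Fintype α] [Fintype β] (M : Matrix α β ℝ) : ℝ :=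
  if Fintype.card α ≤ Fintype.card β then Real.sqrt (lambdaMin (M * Mᵀ))
  else Real.sqrt (lambdaMin (Mᵀ * M))

/-- Entrywise partial-derivative matrix (gradient) of a scalar function of a matrix. -/
def entryDeriv {a b : ℕ} (L : Matrix (Fin a) (Fin b) ℝ → ℝ)
    (M : Matrix (Fin a) (Fin b) ℝ) : Matrix (Fin a) (Fin b) ℝ :=
  Matrix.of fun i j => deriv (fun s : ℝ => L (M + s • Matrix.single i j 1)) 0

/-- `Bseg B a b = B (b-1) * ⋯ * B a` (in the paper's 1-based notation, with
`B l` here being the paper's `B_{(l+1)} : ℝ^{m_{l+1} × m_l}`, this is `B̄^{(a+1:b)}`,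
the product of the layers `a+1, …, b`); `Bseg B a a = 1` and in particular
`Bseg B 0 l` is the paper's `B̄^{(1:l)}`. -/
def Bseg {m : ℕ → ℕ} (B : ∀ l : ℕ, Matrix (Fin (m (l + 1))) (Fin (m l)) ℝ) (a : ℕ) :
    (b : ℕ) → Matrix (Fin (m b)) (Fin (m a)) ℝ
  | 0 => if h : a = 0 then by rw [h]; exact 1 else 0
  | b + 1 => if h : a = b + 1 then by rw [h]; exact 1 else B b * Bseg B a b


attribute [local instance] Matrix.frobeniusNormedAddCommGroup Matrix.frobeniusNormedSpace

/-- Output (restricted to training columns) of the `H`-layer linear GNN. -/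
def gnnOut {n nb my : ℕ} {m : ℕ → ℕ} (H : ℕ)
    (X : Matrix (Fin (m 0)) (Fin n) ℝ) (S : Matrix (Fin n) (Fin n) ℝ)
    (ι : Fin nb → Fin n)
    (W : Matrix (Fin my) (Fin (m H)) ℝ)
    (B : ∀ l : ℕ, Matrix (Fin (m (l + 1))) (Fin (m l)) ℝ) : Matrix (Fin my) (Fin nb) ℝ :=
  W * Bseg B 0 H * X * (S ^ H).submatrix id ι

section aux
variable {s : Set ℝ} {t : ℝ}

section calc1
variable {a b : ℕ} {ℓ : Matrix (Fin a) (Fin b) ℝ → ℝ}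

lemma hasDerivAt_dir (hℓ : Differentiable ℝ ℓ) (M D : Matrix (Fin a) (Fin b) ℝ) :
    HasDerivAt (fun s : ℝ => ℓ (M + s • D)) (fderiv ℝ ℓ M D) 0 := by
  have h1 : HasDerivAt (fun s : ℝ => M + s • D) D 0 := by
    have := ((hasDerivAt_id (0 : ℝ)).smul_const D).const_add M
    rw [one_smul] at this
    exact this
  have h2 : HasFDerivAt ℓ (fderiv ℝ ℓ M) (M + (0 : ℝ) • D) := by
    simpa using (hℓ M).hasFDerivAt
  exact h2.comp_hasDerivAt 0 h1

lemma deriv_dir (hℓ : Differentiable ℝ ℓ) (M D : Matrix (Fin a) (Fin b) ℝ) :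
    deriv (fun s : ℝ => ℓ (M + s • D)) 0 = fderiv ℝ ℓ M D :=
  (hasDerivAt_dir hℓ M D).deriv

lemma entryDeriv_eq_fderiv (hℓ : Differentiable ℝ ℓ) (M : Matrix (Fin a) (Fin b) ℝ)
    (i : Fin a) (j : Fin b) :
    entryDeriv ℓ M i j = fderiv ℝ ℓ M (Matrix.single i j 1) :=
  deriv_dir hℓ M _

lemma fderiv_eq_sum_entryDeriv (hℓ : Differentiable ℝ ℓ) (M D : Matrix (Fin a) (Fin b) ℝ) :
    fderiv ℝ ℓ M D = ∑ i, ∑ j, entryDeriv ℓ M i j * D i j := by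
  conv_lhs => rw [Matrix.matrix_eq_sum_single D]
  rw [map_sum]
  refine Finset.sum_congr rfl fun i _ => ?_
  rw [map_sum]
  refine Finset.sum_congr rfl fun j _ => ?_
  have : Matrix.single i j (D i j) = D i j • Matrix.single i j (1 : ℝ) := by
    ext p q
    simp [Matrix.single, Matrix.smul_apply, mul_ite]
  rw [this, _root_.map_smul, smul_eq_mul, entryDeriv_eq_fderiv hℓ, mul_comm]

lemma deriv_dir_sum (hℓ : Differentiable ℝ ℓ) (M D : Matrix (Fin a) (Fin b) ℝ) :
    deriv (fun s : ℝ => ℓ (M + s • D)) 0 = ∑ i, ∑ j, entryDeriv ℓ M i j * D i j := by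
  rw [deriv_dir hℓ, fderiv_eq_sum_entryDeriv hℓ]

end calc1

section bseg
variable {m : ℕ → ℕ} {B : ∀ l : ℕ, Matrix (Fin (m (l + 1))) (Fin (m l)) ℝ}

lemma Bseg_self (a : ℕ) : Bseg B a a = 1 := by
  cases a with
  | zero => rfl
  | succ b => simp [Bseg]

lemma Bseg_succ {a b : ℕ} (h : a ≠ b + 1) : Bseg B a (b + 1) = B b * Bseg B a b := by
  simp [Bseg, h]

lemma Bseg_zero_succ (b : ℕ) : Bseg B 0 (b + 1) = B b * Bseg B 0 b :=
  Bseg_succ (by omega)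

lemma Bseg_split {l : ℕ} : ∀ {b : ℕ}, l < b →
    Bseg B 0 b = Bseg B (l + 1) b * (B l * Bseg B 0 l)
  | 0, h => absurd h (by omega)
  | b + 1, h => by
    rcases Nat.lt_succ_iff_lt_or_eq.mp h with h' | rfl
    · rw [Bseg_zero_succ, Bseg_split h', Bseg_succ (by omega), Matrix.mul_assoc]
    · rw [Bseg_zero_succ, Bseg_self, Matrix.one_mul]

lemma Bseg_update_le {l : ℕ} (M : Matrix (Fin (m (l + 1))) (Fin (m l)) ℝ) :
    ∀ {b : ℕ}, b ≤ l → ∀ a, Bseg (Function.update B l M) a b = Bseg B a b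
  | 0, _, a => rfl
  | b + 1, h, a => by
    by_cases ha : a = b + 1
    · subst ha; rw [Bseg_self, Bseg_self]
    · rw [Bseg_succ ha, Bseg_succ ha, Function.update_of_ne (by omega),
        Bseg_update_le M (by omega)]

lemma Bseg_update_val {l : ℕ} (M : Matrix (Fin (m (l + 1))) (Fin (m l)) ℝ) :
    ∀ {b : ℕ}, l < b → Bseg (Function.update B l M) 0 b
      = Bseg B (l + 1) b * (M * Bseg B 0 l)
  | b + 1, h => by
    rcases Nat.lt_succ_iff_lt_or_eq.mp h with h' | rfl
    · rw [Bseg_zero_succ, Bseg_update_val M h', Function.update_of_ne (by omega),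
        Bseg_succ (show l + 1 ≠ b + 1 by omega), Matrix.mul_assoc]
    · rw [Bseg_zero_succ, Function.update_self, Bseg_self, Matrix.one_mul,
        Bseg_update_le M le_rfl]

end bseg

section calc2
variable {a b c : ℕ}

lemma hasDerivWithinAt_matrix {F : ℝ → Matrix (Fin a) (Fin b) ℝ}
    {D : Matrix (Fin a) (Fin b) ℝ}
    (hF : ∀ i j, HasDerivWithinAt (fun u => F u i j) (D i j) s t) :
    HasDerivWithinAt F D s t := by
  have h : HasDerivWithinAt
      (fun u => ∑ i, ∑ j, Matrix.single i j (F u i j))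
      (∑ i, ∑ j, Matrix.single i j (D i j)) s t := by
    refine HasDerivWithinAt.fun_sum fun i _ => HasDerivWithinAt.fun_sum fun j _ => ?_
    have hsmul : ∀ (G : Matrix (Fin a) (Fin b) ℝ) (i : Fin a) (j : Fin b),
        Matrix.single i j (G i j) = G i j • Matrix.single i j (1 : ℝ) := by
      intro G i j; ext p q; simp [Matrix.single, Matrix.smul_apply, mul_ite]
    rw [hsmul D]
    exact ((hF i j).smul_const _).congr
      (fun u _ => (hsmul (F u) i j)) (hsmul (F t) i j)
  refine h.congr (fun u _ => ?_) ?_ |>.congr_deriv ?_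
  · exact Matrix.matrix_eq_sum_single (F u)
  · exact Matrix.matrix_eq_sum_single (F t)
  · exact (Matrix.matrix_eq_sum_single D).symm

lemma entry_mul {A : ℝ → Matrix (Fin a) (Fin b) ℝ} {C : ℝ → Matrix (Fin b) (Fin c) ℝ}
    {A' : Matrix (Fin a) (Fin b) ℝ} {C' : Matrix (Fin b) (Fin c) ℝ}
    (hA : ∀ i j, HasDerivWithinAt (fun u => A u i j) (A' i j) s t)
    (hC : ∀ i j, HasDerivWithinAt (fun u => C u i j) (C' i j) s t) :
    ∀ i j, HasDerivWithinAt (fun u => (A u * C u) i j)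
      ((A' * C t + A t * C') i j) s t := by
  intro i j
  have h : HasDerivWithinAt (fun u => ∑ k, A u i k * C u k j)
      (∑ k, (A' i k * C t k j + A t i k * C' k j)) s t :=
    HasDerivWithinAt.fun_sum fun k _ => (hA i k).mul (hC k j)
  have he : (A' * C t + A t * C') i j
      = ∑ k, (A' i k * C t k j + A t i k * C' k j) := by
    simp [Matrix.add_apply, Matrix.mul_apply, Finset.sum_add_distrib]
  rw [he]
  exact h.congr (fun u _ => by simp [Matrix.mul_apply]) (by simp [Matrix.mul_apply])

lemma entry_mul_const {A : ℝ → Matrix (Fin a) (Fin b) ℝ} {A' : Matrix (Fin a) (Fin b) ℝ}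
    (hA : ∀ i j, HasDerivWithinAt (fun u => A u i j) (A' i j) s t)
    (C : Matrix (Fin b) (Fin c) ℝ) :
    ∀ i j, HasDerivWithinAt (fun u => (A u * C) i j) ((A' * C) i j) s t := by
  have := entry_mul (C := fun _ => C) (C' := 0) (A := A) (A' := A') hA
    (fun i j => hasDerivWithinAt_const t s (C i j))
  simpa using this

lemma entry_Bseg {m : ℕ → ℕ} {Bt : ℝ → ∀ l : ℕ, Matrix (Fin (m (l + 1))) (Fin (m l)) ℝ}
    {B' : ∀ l : ℕ, Matrix (Fin (m (l + 1))) (Fin (m l)) ℝ} :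
    ∀ b : ℕ, (∀ l < b, ∀ i j, HasDerivWithinAt (fun u => Bt u l i j) (B' l i j) s t) →
    ∀ i j, HasDerivWithinAt (fun u => Bseg (Bt u) 0 b i j)
      ((∑ l ∈ Finset.range b, Bseg (Bt t) (l + 1) b * B' l * Bseg (Bt t) 0 l) i j) s t
  | 0, _, i, j => by
    simp only [Finset.range_zero, Finset.sum_empty, Matrix.zero_apply]
    exact (hasDerivWithinAt_const t s ((1 : Matrix (Fin (m 0)) (Fin (m 0)) ℝ) i j)).congr
      (fun u _ => by rw [Bseg_self]) (by rw [Bseg_self])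
  | b + 1, h, i, j => by
    have ih := entry_Bseg b (fun l hl => h l (by omega))
    have hmul := entry_mul (A := fun u => Bt u b) (A' := B' b)
      (C := fun u => Bseg (Bt u) 0 b)
      (C' := ∑ l ∈ Finset.range b, Bseg (Bt t) (l + 1) b * B' l * Bseg (Bt t) 0 l)
      (h b (by omega)) ih i j
    have he : (∑ l ∈ Finset.range (b + 1), Bseg (Bt t) (l + 1) (b + 1) * B' l
          * Bseg (Bt t) 0 l)
        = B' b * Bseg (Bt t) 0 b
          + Bt t b * ∑ l ∈ Finset.range b, Bseg (Bt t) (l + 1) b * B' l * Bseg (Bt t) 0 l := by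
      rw [Finset.sum_range_succ, Bseg_self, Matrix.one_mul, Matrix.mul_sum,
        add_comm (B' b * Bseg (Bt t) 0 b)]
      congr 1
      refine Finset.sum_congr rfl fun l hl => ?_
      rw [Bseg_succ (show l + 1 ≠ b + 1 by simp at hl; omega), Matrix.mul_assoc,
        Matrix.mul_assoc, Matrix.mul_assoc]
    rw [he]
    exact hmul.congr (fun u _ => by rw [Bseg_zero_succ]) (by rw [Bseg_zero_succ])

end calc2

section alg
variable {a b c d : ℕ}

lemma sum_mul_eq_trace (V N : Matrix (Fin a) (Fin b) ℝ) :
    ∑ i, ∑ j, V i j * N i j = Matrix.trace (V * Nᵀ) := by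
  simp [Matrix.trace, Matrix.mul_apply, Matrix.diag]

lemma sum_entry_mul_eq (V : Matrix (Fin a) (Fin b) ℝ) (C : Matrix (Fin a) (Fin c) ℝ)
    (M : Matrix (Fin c) (Fin d) ℝ) (E : Matrix (Fin d) (Fin b) ℝ) :
    ∑ i, ∑ j, V i j * (C * M * E) i j = ∑ p, ∑ q, (Cᵀ * V * Eᵀ) p q * M p q := by
  rw [sum_mul_eq_trace, sum_mul_eq_trace, Matrix.transpose_mul, Matrix.transpose_mul,
    ← Matrix.mul_assoc, ← Matrix.mul_assoc, Matrix.trace_mul_comm,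
    ← Matrix.mul_assoc, ← Matrix.mul_assoc]

lemma sum_mul_std (T : Matrix (Fin a) (Fin b) ℝ) (i : Fin a) (j : Fin b) :
    ∑ p, ∑ q, T p q * Matrix.single i j (1 : ℝ) p q = T i j := by
  simp [Matrix.single, Matrix.of_apply, mul_ite, mul_one, mul_zero, ite_and,
    Finset.sum_ite_eq, Finset.sum_ite_eq']

lemma quad_eq {p q r : ℕ} (A : Matrix (Fin p) (Fin q) ℝ) (P : Matrix (Fin r) (Fin q) ℝ) :
    quadForm ((Pᵀ * P) ⊗ₖ (1 : Matrix (Fin p) (Fin p) ℝ)) (vecM A)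
      = ∑ i, ∑ k, ((A * Pᵀ) i k) ^ 2 := by
  simp only [quadForm, dotProduct, Matrix.mulVec, vecM, Fintype.sum_prod_type,
    Matrix.kroneckerMap_apply, Matrix.one_apply, Matrix.mul_apply, Matrix.transpose_apply,
    mul_ite, mul_zero, mul_one, ite_mul, zero_mul]
  rw [Finset.sum_comm]
  refine Finset.sum_congr rfl fun i _ => ?_
  simp only [Finset.sum_ite_eq, Finset.mem_univ, if_true, sq, Finset.mul_sum,
    Finset.sum_mul]
  rw [Finset.sum_comm]
  conv_lhs => rw [Finset.sum_congr rfl fun (x1 : Fin q) _ =>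
    Finset.sum_comm (f := fun a b => A i a * (P b a * P b x1 * A i x1))]
  rw [Finset.sum_comm]
  exact Finset.sum_congr rfl fun _ _ => Finset.sum_congr rfl fun _ _ =>
    Finset.sum_congr rfl fun _ _ => by ring

lemma vecnorm_eq {p q r w : ℕ} (A : Matrix (Fin p) (Fin q) ℝ)
    (R : Matrix (Fin r) (Fin q) ℝ) (C : Matrix (Fin w) (Fin p) ℝ) :
    vecNormSq ((R ⊗ₖ C).mulVec (vecM A)) = ∑ i, ∑ k, ((C * A * Rᵀ) i k) ^ 2 := by
  simp only [vecNormSq, Matrix.mulVec, dotProduct, vecM, Fintype.sum_prod_type,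
    Matrix.kroneckerMap_apply, Matrix.mul_apply, Matrix.transpose_apply, sq,
    Finset.mul_sum, Finset.sum_mul]
  rw [Finset.sum_comm]
  refine Finset.sum_congr rfl fun i _ => Finset.sum_congr rfl fun k _ =>
    Finset.sum_congr rfl fun _ _ => Finset.sum_congr rfl fun _ _ =>
    Finset.sum_congr rfl fun _ _ => Finset.sum_congr rfl fun _ _ => by ring

end alg
end aux

lemma sum_sum_swap {a b : ℕ} {γ : Type*} {s : Finset γ} (g : Fin a → Fin b → γ → ℝ) :
    ∑ i, ∑ j, ∑ l ∈ s, g i j l = ∑ l ∈ s, ∑ i, ∑ j, g i j l := by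
  have h1 : ∀ i : Fin a, ∑ j, ∑ l ∈ s, g i j l = ∑ l ∈ s, ∑ j, g i j l :=
    fun i => Finset.sum_comm (f := fun j l => g i j l)
  simp only [h1]
  exact Finset.sum_comm (f := fun i l => ∑ j, g i j l)

/-- Theorem 3(i) of the paper: exact loss-reduction formula for the
non-multiscale linear GNN under any differentiable loss `ℓ`:
`d/dt L = −‖vec[V_t (X(S^H)_{*I})ᵀ]‖²_{F_{(H),t}} − Σ_{i=1}^H ‖J_{(i,H),t} vec[V_t (X(S^H)_{*I})ᵀ]‖₂²`
(the sum over the paper's `i ∈ {1,…,H}` is written below over `i ∈ range H`,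
with paper-`i` equal to `i+1`). -/
theorem stmt7 {n nb my H : ℕ} {m : ℕ → ℕ}
    (X : Matrix (Fin (m 0)) (Fin n) ℝ) (S : Matrix (Fin n) (Fin n) ℝ)
    (ι : Fin nb → Fin n) (hι : Function.Injective ι)
    (ℓ : Matrix (Fin my) (Fin nb) ℝ → ℝ) (hℓ : Differentiable ℝ ℓ)
    (Wt : ℝ → Matrix (Fin my) (Fin (m H)) ℝ)
    (Bt : ℝ → ∀ l : ℕ, Matrix (Fin (m (l + 1))) (Fin (m l)) ℝ)
    (hW : ∀ t ∈ Set.Ici (0 : ℝ), ∀ i j,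
      HasDerivWithinAt (fun s => Wt s i j)
        (-(entryDeriv (fun W' => ℓ (gnnOut H X S ι W' (Bt t))) (Wt t)) i j) (Set.Ici 0) t)
    (hB : ∀ t ∈ Set.Ici (0 : ℝ), ∀ l < H, ∀ i j,
      HasDerivWithinAt (fun s => Bt s l i j)
        (-(entryDeriv
            (fun M : Matrix (Fin (m (l + 1))) (Fin (m l)) ℝ =>
              ℓ (gnnOut H X S ι (Wt t) (Function.update (Bt t) l M))) (Bt t l)) i j)
        (Set.Ici 0) t) :
    ∀ t ∈ Set.Ici (0 : ℝ),
      ∀ V : Matrix (Fin my) (Fin nb) ℝ,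
      V = entryDeriv ℓ (gnnOut H X S ι (Wt t) (Bt t)) →
      HasDerivWithinAt (fun s => ℓ (gnnOut H X S ι (Wt s) (Bt s)))
        (-(quadForm (((Bseg (Bt t) 0 H)ᵀ * Bseg (Bt t) 0 H) ⊗ₖ
              (1 : Matrix (Fin my) (Fin my) ℝ))
            (vecM (V * (X * (S ^ H).submatrix id ι)ᵀ))
          + ∑ i ∈ Finset.range H,
            vecNormSq ((Bseg (Bt t) 0 i ⊗ₖ (Wt t * Bseg (Bt t) (i + 1) H)ᵀ).mulVec
              (vecM (V * (X * (S ^ H).submatrix id ι)ᵀ)))))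
        (Set.Ici 0) t := by
  intro t ht V hV
  classical
  set K : Matrix (Fin (m 0)) (Fin nb) ℝ := X * (S ^ H).submatrix id ι with hKdef
  have hg : ∀ (W : Matrix (Fin my) (Fin (m H)) ℝ)
      (B : ∀ l : ℕ, Matrix (Fin (m (l + 1))) (Fin (m l)) ℝ),
      gnnOut H X S ι W B = W * Bseg B 0 H * K := by
    intro W B
    rw [gnnOut, hKdef, Matrix.mul_assoc]
  set P : Matrix (Fin (m H)) (Fin (m 0)) ℝ := Bseg (Bt t) 0 H with hPdef
  set GW : Matrix (Fin my) (Fin (m H)) ℝ := V * (P * K)ᵀ with hGWdef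
  set GB : ∀ l : ℕ, Matrix (Fin (m (l + 1))) (Fin (m l)) ℝ :=
    fun l => (Wt t * Bseg (Bt t) (l + 1) H)ᵀ * V * (Bseg (Bt t) 0 l * K)ᵀ with hGBdef
  -- identification of the W-gradient
  have gradW : entryDeriv (fun W' => ℓ (gnnOut H X S ι W' (Bt t))) (Wt t) = GW := by
    ext i j
    set E := Matrix.single i j (1 : ℝ) with hE
    have hfun : ∀ s : ℝ, gnnOut H X S ι (Wt t + s • E) (Bt t)
        = gnnOut H X S ι (Wt t) (Bt t)
          + s • ((1 : Matrix (Fin my) (Fin my) ℝ) * E * (P * K)) := by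
      intro s
      rw [hg, hg, ← hPdef]
      simp only [Matrix.add_mul, Matrix.smul_mul, Matrix.one_mul, Matrix.mul_assoc]
    have hceq : (fun s : ℝ => ℓ (gnnOut H X S ι (Wt t + s • E) (Bt t)))
        = fun s : ℝ => ℓ (gnnOut H X S ι (Wt t) (Bt t)
          + s • ((1 : Matrix (Fin my) (Fin my) ℝ) * E * (P * K))) :=
      funext fun s => by rw [hfun s]
    show deriv (fun s : ℝ => ℓ (gnnOut H X S ι (Wt t + s • E) (Bt t))) 0 = GW i j
    rw [hceq, deriv_dir_sum hℓ, ← hV, sum_entry_mul_eq, hGWdef]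
    rw [show ((1 : Matrix (Fin my) (Fin my) ℝ)ᵀ * V * (P * K)ᵀ) = V * (P * K)ᵀ by
      rw [Matrix.transpose_one, Matrix.one_mul]]
    exact sum_mul_std _ i j
  -- identification of the B-gradients
  have gradB : ∀ l, l < H → entryDeriv
      (fun M : Matrix (Fin (m (l + 1))) (Fin (m l)) ℝ =>
        ℓ (gnnOut H X S ι (Wt t) (Function.update (Bt t) l M))) (Bt t l) = GB l := by
    intro l hl
    ext i j
    set E := Matrix.single i j (1 : ℝ) with hE
    set Q : Matrix (Fin (m H)) (Fin (m (l + 1))) ℝ := Bseg (Bt t) (l + 1) H with hQdef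
    set R : Matrix (Fin (m l)) (Fin (m 0)) ℝ := Bseg (Bt t) 0 l with hRdef
    have hfun : ∀ s : ℝ,
        gnnOut H X S ι (Wt t) (Function.update (Bt t) l (Bt t l + s • E))
        = gnnOut H X S ι (Wt t) (Bt t) + s • ((Wt t * Q) * E * (R * K)) := by
      intro s
      rw [hg, hg, Bseg_update_val _ hl, ← hQdef, ← hRdef,
        show Bseg (Bt t) 0 H = Q * (Bt t l * R) from Bseg_split hl]
      simp only [Matrix.add_mul, Matrix.mul_add, Matrix.smul_mul, Matrix.mul_smul,
        Matrix.mul_assoc]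
    have hceq : (fun s : ℝ =>
          ℓ (gnnOut H X S ι (Wt t) (Function.update (Bt t) l (Bt t l + s • E))))
        = fun s : ℝ => ℓ (gnnOut H X S ι (Wt t) (Bt t)
          + s • ((Wt t * Q) * E * (R * K))) :=
      funext fun s => by rw [hfun s]
    show deriv (fun s : ℝ =>
        ℓ (gnnOut H X S ι (Wt t) (Function.update (Bt t) l (Bt t l + s • E)))) 0 = GB l i j
    rw [hceq, deriv_dir_sum hℓ, ← hV, sum_entry_mul_eq, hGBdef]
    exact sum_mul_std _ i j
  -- trajectory derivatives
  have hW' : ∀ i j, HasDerivWithinAt (fun u => Wt u i j) ((-GW) i j) (Set.Ici 0) t := by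
    intro i j
    have := hW t ht i j
    rwa [gradW] at this
  have hB' : ∀ l, l < H → ∀ i j,
      HasDerivWithinAt (fun u => Bt u l i j) ((-(GB l)) i j) (Set.Ici 0) t := by
    intro l hl i j
    have := hB t ht l hl i j
    rwa [gradB l hl] at this
  set Pd : Matrix (Fin (m H)) (Fin (m 0)) ℝ :=
    ∑ l ∈ Finset.range H, Bseg (Bt t) (l + 1) H * (-(GB l)) * Bseg (Bt t) 0 l with hPdDef
  have hPd : ∀ i j, HasDerivWithinAt (fun u => Bseg (Bt u) 0 H i j) (Pd i j)
      (Set.Ici 0) t :=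
    entry_Bseg H (fun l hl => hB' l hl)
  have hWB : ∀ i j, HasDerivWithinAt (fun u => (Wt u * Bseg (Bt u) 0 H) i j)
      (((-GW) * P + Wt t * Pd) i j) (Set.Ici 0) t :=
    entry_mul hW' hPd
  set Dtot : Matrix (Fin my) (Fin nb) ℝ := ((-GW) * P + Wt t * Pd) * K with hDtotDef
  have hFe : ∀ i j, HasDerivWithinAt (fun u => (Wt u * Bseg (Bt u) 0 H * K) i j)
      (Dtot i j) (Set.Ici 0) t :=
    entry_mul_const hWB K
  have hFmat : HasDerivWithinAt (fun u => gnnOut H X S ι (Wt u) (Bt u)) Dtot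
      (Set.Ici 0) t :=
    (hasDerivWithinAt_matrix hFe).congr (fun u _ => hg (Wt u) (Bt u)) (hg (Wt t) (Bt t))
  have hfin : HasDerivWithinAt (fun u => ℓ (gnnOut H X S ι (Wt u) (Bt u)))
      (fderiv ℝ ℓ (gnnOut H X S ι (Wt t) (Bt t)) Dtot) (Set.Ici 0) t :=
    (hℓ _).hasFDerivAt.comp_hasDerivWithinAt t hFmat
  refine hfin.congr_deriv ?_
  rw [fderiv_eq_sum_entryDeriv hℓ, ← hV]
  -- final algebra
  have hsplit : ∑ i, ∑ j, V i j * Dtot i j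
      = (∑ i, ∑ j, V i j * ((-GW) * P * K) i j)
        + ∑ i, ∑ j, V i j * ((Wt t * Pd) * K) i j := by
    rw [hDtotDef, Matrix.add_mul]
    simp [Matrix.add_apply, mul_add, Finset.sum_add_distrib]
  have hterm1 : ∑ i, ∑ j, V i j * ((-GW) * P * K) i j = -(∑ p, ∑ q, GW p q ^ 2) := by
    rw [show (-GW) * P * K = (1 : Matrix (Fin my) (Fin my) ℝ) * (-GW) * (P * K) by
        simp only [Matrix.one_mul, Matrix.mul_assoc],
      sum_entry_mul_eq,
      show ((1 : Matrix (Fin my) (Fin my) ℝ)ᵀ * V * (P * K)ᵀ) = GW by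
        rw [Matrix.transpose_one, Matrix.one_mul, hGWdef]]
    simp [Matrix.neg_apply, mul_neg, sq, Finset.sum_neg_distrib]
  have hterm2 : ∑ i, ∑ j, V i j * ((Wt t * Pd) * K) i j
      = -(∑ l ∈ Finset.range H, ∑ p, ∑ q, GB l p q ^ 2) := by
    have hPdK : (Wt t * Pd) * K = ∑ l ∈ Finset.range H,
        (Wt t * Bseg (Bt t) (l + 1) H) * (-(GB l)) * (Bseg (Bt t) 0 l * K) := by
      rw [hPdDef, Matrix.mul_sum, Matrix.sum_mul]
      exact Finset.sum_congr rfl fun l _ => by simp only [Matrix.mul_assoc]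
    rw [hPdK]
    have hswap : ∑ i, ∑ j, V i j * ((∑ l ∈ Finset.range H,
          (Wt t * Bseg (Bt t) (l + 1) H) * (-(GB l)) * (Bseg (Bt t) 0 l * K)) i j)
        = ∑ l ∈ Finset.range H, ∑ i, ∑ j, V i j *
            ((Wt t * Bseg (Bt t) (l + 1) H) * (-(GB l)) * (Bseg (Bt t) 0 l * K)) i j := by
      simp only [Matrix.sum_apply, Finset.mul_sum]
      exact sum_sum_swap _
    rw [hswap, ← Finset.sum_neg_distrib]
    refine Finset.sum_congr rfl fun l hl => ?_
    rw [sum_entry_mul_eq, show ((Wt t * Bseg (Bt t) (l + 1) H)ᵀ * V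
        * (Bseg (Bt t) 0 l * K)ᵀ) = GB l from (hGBdef ▸ rfl)]
    simp [Matrix.neg_apply, mul_neg, sq, Finset.sum_neg_distrib]
  have hquad : quadForm ((Pᵀ * P) ⊗ₖ (1 : Matrix (Fin my) (Fin my) ℝ))
      (vecM (V * Kᵀ)) = ∑ p, ∑ q, GW p q ^ 2 := by
    have hGW2 : GW = V * Kᵀ * Pᵀ := by
      rw [hGWdef, Matrix.transpose_mul, ← Matrix.mul_assoc]
    rw [quad_eq, ← hGW2]
  have hvec : ∀ l, vecNormSq ((Bseg (Bt t) 0 l ⊗ₖ (Wt t * Bseg (Bt t) (l + 1) H)ᵀ).mulVec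
      (vecM (V * Kᵀ))) = ∑ p, ∑ q, GB l p q ^ 2 := by
    intro l
    have hGB2 : GB l = (Wt t * Bseg (Bt t) (l + 1) H)ᵀ * (V * Kᵀ) * (Bseg (Bt t) 0 l)ᵀ := by
      simp only [hGBdef, Matrix.transpose_mul, Matrix.mul_assoc]
    rw [vecnorm_eq, ← hGB2]
  rw [hsplit, hterm1, hterm2, hquad]
  rw [Finset.sum_congr rfl fun l (_ : l ∈ Finset.range H) => hvec l]
  ring


end
end

section
/- For an H-layer linear GNN with squared loss, along any gradient flow trajectory (W_t,B_t), the end-to-end matrix Z_{(H),t} := W_t B_{(H),t}⋯B_{(1),t} ∈ ℝ^{m_y×m_x} satisfies the induced dynamics d/dt vec(Z_{(H),t}) = −( F_{(H),t} + Σ_{i=1}^H J_{(i,H),t}ᵀ J_{(i,H),t} ) · vec(∇_{(H)}L(W_t,B_t)), where ∇_{(H)}L(W,B) = (∂L/∂Ŷ)(X(S^H)_{*I})ᵀ with Ŷ = Z_{(H)} X(S^H)_{*I} and ∂L/∂Ŷ = 2(Ŷ − Y). -/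
open Matrix
open scoped Kronecker

noncomputable section

/-- Training loss of the `H`-layer linear GNN with squared loss. -/
def gnnLoss {n nb my : ℕ} {m : ℕ → ℕ} (H : ℕ)
    (X : Matrix (Fin (m 0)) (Fin n) ℝ) (S : Matrix (Fin n) (Fin n) ℝ)
    (ι : Fin nb → Fin n) (Y : Matrix (Fin my) (Fin nb) ℝ)
    (W : Matrix (Fin my) (Fin (m H)) ℝ)
    (B : ∀ l : ℕ, Matrix (Fin (m (l + 1))) (Fin (m l)) ℝ) : ℝ :=
  frobSq (W * Bseg B 0 H * X * (S ^ H).submatrix id ι - Y)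


variable {m : ℕ → ℕ}

lemma bseg_zero (B : ∀ l : ℕ, Matrix (Fin (m (l + 1))) (Fin (m l)) ℝ) (a : ℕ) :
    Bseg B a 0 = if h : a = 0 then by rw [h]; exact (1 : Matrix (Fin (m 0)) (Fin (m 0)) ℝ) else 0 := rfl

lemma bseg_succ (B : ∀ l : ℕ, Matrix (Fin (m (l + 1))) (Fin (m l)) ℝ) {a b : ℕ} (h : a ≠ b + 1) :
    Bseg B a (b + 1) = B b * Bseg B a b := by
  rw [Bseg, dif_neg h]

lemma bseg_same (B : ∀ l : ℕ, Matrix (Fin (m (l + 1))) (Fin (m l)) ℝ) (a : ℕ) :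
    Bseg B a a = 1 := by
  cases a with
  | zero => simp [Bseg]
  | succ b => simp [Bseg]

lemma bseg_of_gt {B : ∀ l : ℕ, Matrix (Fin (m (l + 1))) (Fin (m l)) ℝ} {a b : ℕ}
    (h : b < a) : Bseg B a b = 0 := by
  induction b with
  | zero => rw [bseg_zero, dif_neg (by omega)]
  | succ b ih =>
    rw [bseg_succ B (by omega), ih (by omega), Matrix.mul_zero]

lemma bseg_congr {B B' : ∀ l : ℕ, Matrix (Fin (m (l + 1))) (Fin (m l)) ℝ} (a b : ℕ)
    (h : ∀ c, a ≤ c → c < b → B c = B' c) : Bseg B a b = Bseg B' a b := by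
  induction b with
  | zero => rfl
  | succ b ih =>
    by_cases hab : a = b + 1
    · rw [Bseg, Bseg, dif_pos hab, dif_pos hab]
    · by_cases hle : a ≤ b
      · rw [bseg_succ B hab, bseg_succ B' hab,
          h b (by omega) (by omega), ih (fun c hc hc' => h c hc (by omega))]
      · rw [bseg_of_gt (by omega), bseg_of_gt (by omega)]

lemma bseg_split {B : ∀ l : ℕ, Matrix (Fin (m (l + 1))) (Fin (m l)) ℝ} {a b c : ℕ}
    (hab : a ≤ b) (hbc : b ≤ c) : Bseg B a c = Bseg B b c * Bseg B a b := by
  induction c with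
  | zero =>
    have hb : b = 0 := by omega
    subst hb
    rw [bseg_same, Matrix.one_mul]
  | succ c ih =>
    by_cases hbc' : b = c + 1
    · subst hbc'
      rw [bseg_same, Matrix.one_mul]
    · have hbc'' : b ≤ c := by omega
      have hac : a ≠ c + 1 := Nat.ne_of_lt (by omega)
      rw [bseg_succ B hac, bseg_succ B hbc', ih hbc'', Matrix.mul_assoc]

/-- Formal derivative of `Bseg`: `B'` plays the role of the entrywise derivative of `B`. -/
def Dseg (B B' : ∀ l : ℕ, Matrix (Fin (m (l + 1))) (Fin (m l)) ℝ) (a : ℕ) :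
    (b : ℕ) → Matrix (Fin (m b)) (Fin (m a)) ℝ
  | 0 => 0
  | b + 1 => if a = b + 1 then 0 else B' b * Bseg B a b + B b * Dseg B B' a b

lemma dseg_eq_sum {B B' : ∀ l : ℕ, Matrix (Fin (m (l + 1))) (Fin (m l)) ℝ} {a b : ℕ}
    (hab : a ≤ b) :
    Dseg B B' a b = ∑ l ∈ Finset.Ico a b, Bseg B (l + 1) b * B' l * Bseg B a l := by
  induction b with
  | zero =>
    have : a = 0 := by omega
    subst this
    simp [Dseg]
  | succ b ih =>
    by_cases h : a = b + 1
    · subst h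
      rw [Dseg, if_pos rfl, Finset.Ico_self, Finset.sum_empty]
    · have hab' : a ≤ b := by omega
      rw [Dseg, if_neg h, ih hab', Finset.sum_Ico_succ_top hab', bseg_same, Matrix.one_mul,
        Matrix.mul_sum]
      have hsum : ∑ l ∈ Finset.Ico a b, B b * (Bseg B (l + 1) b * B' l * Bseg B a l)
          = ∑ l ∈ Finset.Ico a b, Bseg B (l + 1) (b + 1) * B' l * Bseg B a l := by
        refine Finset.sum_congr rfl fun l hl => ?_
        have hl' : l < b := (Finset.mem_Ico.mp hl).2
        rw [bseg_succ B (by omega)]; simp only [Matrix.mul_assoc]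
      rw [hsum]; exact add_comm _ _

lemma hasDeriv_matmul {α β γ : Type*} [Fintype β] {F : ℝ → Matrix α β ℝ} {G : ℝ → Matrix β γ ℝ}
    {F' : Matrix α β ℝ} {G' : Matrix β γ ℝ} {s : Set ℝ} {t : ℝ}
    (hF : ∀ i j, HasDerivWithinAt (fun u => F u i j) (F' i j) s t)
    (hG : ∀ i j, HasDerivWithinAt (fun u => G u i j) (G' i j) s t) :
    ∀ i j, HasDerivWithinAt (fun u => (F u * G u) i j) ((F' * G t + F t * G') i j) s t := by
  intro i j
  have he : (fun u => (F u * G u) i j) = fun u => ∑ k, F u i k * G u k j := by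
    funext u; exact Matrix.mul_apply
  rw [he]
  have h := HasDerivWithinAt.fun_sum (fun k (_ : k ∈ Finset.univ) => (hF i k).mul (hG k j))
  have hv : (F' * G t + F t * G') i j
      = ∑ k, (F' i k * G t k j + F t i k * G' k j) := by
    simp [Matrix.add_apply, Matrix.mul_apply, Finset.sum_add_distrib]
  rw [hv]
  exact h

lemma hasDeriv_bseg {Bt : ℝ → ∀ l : ℕ, Matrix (Fin (m (l + 1))) (Fin (m l)) ℝ}
    {B' : ∀ l : ℕ, Matrix (Fin (m (l + 1))) (Fin (m l)) ℝ} {s : Set ℝ} {t : ℝ} (a b : ℕ)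
    (hB : ∀ l < b, ∀ i j, HasDerivWithinAt (fun u => Bt u l i j) (B' l i j) s t) :
    ∀ i j, HasDerivWithinAt (fun u => Bseg (Bt u) a b i j)
      (Dseg (Bt t) B' a b i j) s t := by
  induction b with
  | zero =>
    intro i j
    have he : (fun u => Bseg (Bt u) a 0 i j) = fun _ => Bseg (Bt t) a 0 i j := rfl
    rw [he]
    have hv : Dseg (Bt t) B' a 0 i j = 0 := rfl
    rw [hv]
    exact hasDerivWithinAt_const t s _
  | succ b ih =>
    intro i j
    by_cases h : a = b + 1
    · have he : (fun u => Bseg (Bt u) a (b + 1) i j) = fun _ => Bseg (Bt t) a (b + 1) i j := by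
        funext u; rw [Bseg, Bseg, dif_pos h, dif_pos h]
      rw [he]
      have hv : Dseg (Bt t) B' a (b + 1) i j = 0 := by rw [Dseg, if_pos h]; rfl
      rw [hv]
      exact hasDerivWithinAt_const t s _
    · have he : (fun u => Bseg (Bt u) a (b + 1) i j)
          = fun u => (Bt u b * Bseg (Bt u) a b) i j := by
        funext u; rw [bseg_succ _ h]
      rw [he]
      have hv : Dseg (Bt t) B' a (b + 1) i j
          = (B' b * Bseg (Bt t) a b + Bt t b * Dseg (Bt t) B' a b) i j := by
        rw [Dseg, if_neg h]
      rw [hv]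
      exact hasDeriv_matmul (hB b (by omega)) (ih (fun l hl => hB l (by omega))) i j

lemma entryDeriv_frobSq {a b c d : ℕ} (A : Matrix (Fin c) (Fin a) ℝ) (C : Matrix (Fin b) (Fin d) ℝ)
    (Y : Matrix (Fin c) (Fin d) ℝ) (M : Matrix (Fin a) (Fin b) ℝ) :
    entryDeriv (fun M' => frobSq (A * M' * C - Y)) M
      = (2 : ℝ) • (Aᵀ * (A * M * C - Y) * Cᵀ) := by
  ext i j
  set R := A * M * C - Y with hR
  have hmat : ∀ s : ℝ, A * (M + s • Matrix.single i j (1:ℝ)) * C - Y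
      = R + s • (A * Matrix.single i j (1:ℝ) * C) := by
    intro s
    rw [Matrix.mul_add, Matrix.add_mul, Matrix.mul_smul, Matrix.smul_mul, hR,
      add_sub_right_comm]
  have hAEC : ∀ (p : Fin c) (q : Fin d),
      (A * Matrix.single i j (1:ℝ) * C) p q = A p i * C j q := by
    intro p q
    simp [Matrix.mul_apply, Matrix.single, ite_and, Finset.sum_ite_eq,
      Finset.mul_sum, Finset.sum_mul]
  have hfun : (fun s : ℝ => frobSq (A * (M + s • Matrix.single i j (1:ℝ)) * C - Y))
      = fun s : ℝ => ∑ p, ∑ q, (R p q + s * (A p i * C j q)) ^ 2 := by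
    funext s
    rw [hmat s]
    unfold frobSq
    refine Finset.sum_congr rfl fun p _ => Finset.sum_congr rfl fun q _ => ?_
    rw [Matrix.add_apply, Matrix.smul_apply, hAEC p q, smul_eq_mul]
  have hd : HasDerivAt (fun s : ℝ => ∑ p, ∑ q, (R p q + s * (A p i * C j q)) ^ 2)
      (∑ p, ∑ q, 2 * R p q * (A p i * C j q)) 0 := by
    refine HasDerivAt.fun_sum fun p _ => HasDerivAt.fun_sum fun q _ => ?_
    have h1 : HasDerivAt (fun s : ℝ => R p q + s * (A p i * C j q)) (A p i * C j q) 0 := by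
      simpa using ((hasDerivAt_id (0 : ℝ)).mul_const (A p i * C j q)).const_add (R p q)
    have h2 := h1.pow 2
    norm_num at h2
    exact h2
  have : entryDeriv (fun M' => frobSq (A * M' * C - Y)) M i j
      = ∑ p, ∑ q, 2 * R p q * (A p i * C j q) := by
    show deriv (fun s : ℝ => frobSq (A * (M + s • Matrix.single i j (1:ℝ)) * C - Y)) 0 = _
    rw [hfun]
    exact hd.deriv
  rw [this]
  rw [Matrix.smul_apply, Matrix.mul_apply, smul_eq_mul, Finset.mul_sum]
  rw [Finset.sum_comm]
  refine Finset.sum_congr rfl fun q _ => ?_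
  rw [Matrix.mul_apply, Matrix.transpose_apply, Finset.sum_mul, Finset.mul_sum]
  refine Finset.sum_congr rfl fun p _ => ?_
  rw [Matrix.transpose_apply]
  ring

lemma gradW_eq {n nb my H : ℕ} {m : ℕ → ℕ}
    (X : Matrix (Fin (m 0)) (Fin n) ℝ) (S : Matrix (Fin n) (Fin n) ℝ)
    (ι : Fin nb → Fin n) (Y : Matrix (Fin my) (Fin nb) ℝ)
    (W : Matrix (Fin my) (Fin (m H)) ℝ)
    (B : ∀ l : ℕ, Matrix (Fin (m (l + 1))) (Fin (m l)) ℝ) :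
    entryDeriv (fun W' => gnnLoss H X S ι Y W' B) W
      = ((2 : ℝ) • (W * Bseg B 0 H * X * (S ^ H).submatrix id ι - Y)) *
          (X * (S ^ H).submatrix id ι)ᵀ * (Bseg B 0 H)ᵀ := by
  set Sh := (S ^ H).submatrix id ι with hSh
  have hfun : (fun W' => gnnLoss H X S ι Y W' B)
      = fun W' => frobSq ((1 : Matrix (Fin my) (Fin my) ℝ) * W' * (Bseg B 0 H * X * Sh) - Y) := by
    funext W'
    unfold gnnLoss
    rw [Matrix.one_mul, ← Matrix.mul_assoc, ← Matrix.mul_assoc]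
  rw [hfun, entryDeriv_frobSq]
  simp only [Matrix.transpose_one, Matrix.one_mul, Matrix.transpose_mul, Matrix.smul_mul,
    Matrix.mul_smul, Matrix.mul_assoc]

lemma gradB_eq {n nb my H : ℕ} {m : ℕ → ℕ}
    (X : Matrix (Fin (m 0)) (Fin n) ℝ) (S : Matrix (Fin n) (Fin n) ℝ)
    (ι : Fin nb → Fin n) (Y : Matrix (Fin my) (Fin nb) ℝ)
    (W : Matrix (Fin my) (Fin (m H)) ℝ)
    (B : ∀ l : ℕ, Matrix (Fin (m (l + 1))) (Fin (m l)) ℝ) (l : ℕ) (hl : l < H) :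
    entryDeriv (fun M : Matrix (Fin (m (l + 1))) (Fin (m l)) ℝ =>
        gnnLoss H X S ι Y W (Function.update B l M)) (B l)
      = (W * Bseg B (l + 1) H)ᵀ *
          (((2 : ℝ) • (W * Bseg B 0 H * X * (S ^ H).submatrix id ι - Y)) *
            (X * (S ^ H).submatrix id ι)ᵀ) * (Bseg B 0 l)ᵀ := by
  set Sh := (S ^ H).submatrix id ι with hSh
  have hupd : ∀ M : Matrix (Fin (m (l + 1))) (Fin (m l)) ℝ,
      Bseg (Function.update B l M) 0 H = Bseg B (l + 1) H * M * Bseg B 0 l := by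
    intro M
    have h1 : Bseg (Function.update B l M) 0 H
        = Bseg (Function.update B l M) (l + 1) H * Bseg (Function.update B l M) 0 (l + 1) :=
      bseg_split (by omega) (by omega)
    have h2 : Bseg (Function.update B l M) (l + 1) H = Bseg B (l + 1) H :=
      bseg_congr _ _ (fun c hc _ => Function.update_of_ne (by omega) _ _)
    have h3 : Bseg (Function.update B l M) 0 l = Bseg B 0 l :=
      bseg_congr _ _ (fun c _ hc => Function.update_of_ne (by omega) _ _)
    have h4 : Bseg (Function.update B l M) 0 (l + 1)
        = M * Bseg (Function.update B l M) 0 l := by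
      rw [bseg_succ _ (by omega), Function.update_self]
    rw [h1, h2, h4, h3, Matrix.mul_assoc]
  have hsplit : Bseg B 0 H = Bseg B (l + 1) H * B l * Bseg B 0 l := by
    have h := hupd (B l)
    rwa [Function.update_eq_self] at h
  have hfun : (fun M : Matrix (Fin (m (l + 1))) (Fin (m l)) ℝ =>
        gnnLoss H X S ι Y W (Function.update B l M))
      = fun M => frobSq ((W * Bseg B (l + 1) H) * M * (Bseg B 0 l * X * Sh) - Y) := by
    funext M
    unfold gnnLoss
    rw [hupd M]
    simp only [Matrix.mul_assoc, hSh]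
  rw [hfun, entryDeriv_frobSq]
  have hres : (W * Bseg B (l + 1) H) * B l * (Bseg B 0 l * X * Sh)
      = W * Bseg B 0 H * X * Sh := by
    rw [hsplit]; simp only [Matrix.mul_assoc]
  rw [hres]
  simp only [Matrix.transpose_mul, Matrix.smul_mul, Matrix.mul_smul, Matrix.mul_assoc]

lemma kron_mulVec_apply {α β : Type*} [Fintype α] [Fintype β]
    (N : Matrix α α ℝ) (A : Matrix β β ℝ) (Xg : Matrix β α ℝ) (p : α × β) :
    ((N ⊗ₖ A).mulVec (vecM Xg)) p = (A * Xg * Nᵀ) p.2 p.1 := by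
  obtain ⟨j, i⟩ := p
  simp only [Matrix.mulVec, dotProduct, vecM, Fintype.sum_prod_type,
    Matrix.kroneckerMap_apply, Matrix.mul_apply, Matrix.transpose_apply]
  refine Finset.sum_congr rfl fun k _ => ?_
  rw [Finset.sum_mul]
  refine Finset.sum_congr rfl fun l _ => ?_
  ring

lemma sum_mulVec {α β γ : Type*} [Fintype β] (s : Finset γ) (M : γ → Matrix α β ℝ)
    (v : β → ℝ) : (∑ l ∈ s, M l).mulVec v = ∑ l ∈ s, (M l).mulVec v := by
  funext x
  simp only [Matrix.mulVec, dotProduct, Matrix.sum_apply, Finset.sum_apply,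
    Finset.sum_mul]
  rw [Finset.sum_comm]


/-- induced gradient dynamics of the end-to-end matrix
`Z_{(H),t} = W_t B_{(H),t}⋯B_{(1),t}`:
`d/dt vec(Z) = −(F_{(H),t} + Σ_{i=1}^H J_{(i,H),t}ᵀ J_{(i,H),t}) vec(∇_{(H)}L)`
(stated entrywise; the paper's sum over `i ∈ {1,…,H}` is written over `i ∈ range H`,
with paper-`i` equal to `i+1`). -/
theorem stmt15 {n nb my H : ℕ} {m : ℕ → ℕ}
    (X : Matrix (Fin (m 0)) (Fin n) ℝ) (S : Matrix (Fin n) (Fin n) ℝ)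
    (ι : Fin nb → Fin n) (hι : Function.Injective ι)
    (Y : Matrix (Fin my) (Fin nb) ℝ)
    (Wt : ℝ → Matrix (Fin my) (Fin (m H)) ℝ)
    (Bt : ℝ → ∀ l : ℕ, Matrix (Fin (m (l + 1))) (Fin (m l)) ℝ)
    (hW : ∀ t ∈ Set.Ici (0 : ℝ), ∀ i j,
      HasDerivWithinAt (fun s => Wt s i j)
        (-(entryDeriv (fun W' => gnnLoss H X S ι Y W' (Bt t)) (Wt t)) i j) (Set.Ici 0) t)
    (hB : ∀ t ∈ Set.Ici (0 : ℝ), ∀ l < H, ∀ i j,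
      HasDerivWithinAt (fun s => Bt s l i j)
        (-(entryDeriv
            (fun M : Matrix (Fin (m (l + 1))) (Fin (m l)) ℝ =>
              gnnLoss H X S ι Y (Wt t) (Function.update (Bt t) l M)) (Bt t l)) i j)
        (Set.Ici 0) t) :
    ∀ t ∈ Set.Ici (0 : ℝ),
      ∀ grad : Matrix (Fin my) (Fin (m 0)) ℝ,
      grad = ((2 : ℝ) • (Wt t * Bseg (Bt t) 0 H * X * (S ^ H).submatrix id ι - Y)) *
        (X * (S ^ H).submatrix id ι)ᵀ →
      ∀ p : Fin (m 0) × Fin my,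
        HasDerivWithinAt (fun s => vecM (Wt s * Bseg (Bt s) 0 H) p)
          (-(((((Bseg (Bt t) 0 H)ᵀ * Bseg (Bt t) 0 H) ⊗ₖ
                (1 : Matrix (Fin my) (Fin my) ℝ)) +
              ∑ i ∈ Finset.range H,
                (Bseg (Bt t) 0 i ⊗ₖ (Wt t * Bseg (Bt t) (i + 1) H)ᵀ)ᵀ *
                  (Bseg (Bt t) 0 i ⊗ₖ (Wt t * Bseg (Bt t) (i + 1) H)ᵀ)).mulVec
            (vecM grad)) p)
          (Set.Ici 0) t := by
  intro t ht grad hgrad p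
  classical
  set P := Bseg (Bt t) 0 H with hP
  -- derivative of W
  have hW' : ∀ i j, HasDerivWithinAt (fun s => Wt s i j) ((-(grad * Pᵀ)) i j)
      (Set.Ici 0) t := by
    intro i j
    have h := hW t ht i j
    rw [gradW_eq X S ι Y (Wt t) (Bt t)] at h
    rw [← hP] at h
    rw [hgrad]
    exact h
  -- derivative of B
  set B' : ∀ l : ℕ, Matrix (Fin (m (l + 1))) (Fin (m l)) ℝ := fun l =>
    if hl : l < H then
      -((Wt t * Bseg (Bt t) (l + 1) H)ᵀ * grad * (Bseg (Bt t) 0 l)ᵀ) else 0 with hB'def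
  have hB' : ∀ l < H, ∀ i j, HasDerivWithinAt (fun s => Bt s l i j) (B' l i j)
      (Set.Ici 0) t := by
    intro l hl i j
    have h := hB t ht l hl i j
    rw [gradB_eq X S ι Y (Wt t) (Bt t) l hl] at h
    have : B' l = -((Wt t * Bseg (Bt t) (l + 1) H)ᵀ * grad * (Bseg (Bt t) 0 l)ᵀ) := by
      rw [hB'def]; exact dif_pos hl
    rw [this, hgrad]
    rw [Matrix.mul_assoc ((Wt t * Bseg (Bt t) (l + 1) H)ᵀ)] at h ⊢
    exact h
  have hZ := hasDeriv_matmul (F := Wt) (G := fun s => Bseg (Bt s) 0 H)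
    (F' := -(grad * Pᵀ)) (G' := Dseg (Bt t) B' 0 H) hW' (hasDeriv_bseg 0 H hB')
  -- identify the derivative value
  have hDseg : Wt t * Dseg (Bt t) B' 0 H
      = ∑ l ∈ Finset.range H,
          -((Wt t * Bseg (Bt t) (l + 1) H) * (Wt t * Bseg (Bt t) (l + 1) H)ᵀ * grad *
            ((Bseg (Bt t) 0 l)ᵀ * Bseg (Bt t) 0 l)ᵀ) := by
    rw [dseg_eq_sum (Nat.zero_le H), ← Finset.range_eq_Ico, Matrix.mul_sum]
    refine Finset.sum_congr rfl fun l hl => ?_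
    have hl' : l < H := Finset.mem_range.mp hl
    have hBl : B' l = -((Wt t * Bseg (Bt t) (l + 1) H)ᵀ * grad * (Bseg (Bt t) 0 l)ᵀ) := by
      rw [hB'def]; exact dif_pos hl'
    rw [hBl]
    simp only [Matrix.mul_neg, Matrix.neg_mul, Matrix.transpose_mul,
      Matrix.transpose_transpose, Matrix.mul_assoc]
  have hkron : ∀ l,
      (Bseg (Bt t) 0 l ⊗ₖ (Wt t * Bseg (Bt t) (l + 1) H)ᵀ)ᵀ *
        (Bseg (Bt t) 0 l ⊗ₖ (Wt t * Bseg (Bt t) (l + 1) H)ᵀ)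
      = ((Bseg (Bt t) 0 l)ᵀ * Bseg (Bt t) 0 l) ⊗ₖ
          ((Wt t * Bseg (Bt t) (l + 1) H) * (Wt t * Bseg (Bt t) (l + 1) H)ᵀ) := by
    intro l
    rw [← Matrix.kroneckerMap_transpose, Matrix.transpose_transpose,
      ← Matrix.mul_kronecker_mul]
  -- rewrite the target derivative value
  have hval :
      (-(((Pᵀ * P) ⊗ₖ (1 : Matrix (Fin my) (Fin my) ℝ) +
          ∑ i ∈ Finset.range H,
            (Bseg (Bt t) 0 i ⊗ₖ (Wt t * Bseg (Bt t) (i + 1) H)ᵀ)ᵀ *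
              (Bseg (Bt t) 0 i ⊗ₖ (Wt t * Bseg (Bt t) (i + 1) H)ᵀ)).mulVec
        (vecM grad)) p)
      = ((-(grad * Pᵀ)) * P + Wt t * Dseg (Bt t) B' 0 H) p.2 p.1 := by
    have hsum : (∑ i ∈ Finset.range H,
        (Bseg (Bt t) 0 i ⊗ₖ (Wt t * Bseg (Bt t) (i + 1) H)ᵀ)ᵀ *
          (Bseg (Bt t) 0 i ⊗ₖ (Wt t * Bseg (Bt t) (i + 1) H)ᵀ))
        = ∑ i ∈ Finset.range H,
          ((Bseg (Bt t) 0 i)ᵀ * Bseg (Bt t) 0 i) ⊗ₖ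
            ((Wt t * Bseg (Bt t) (i + 1) H) * (Wt t * Bseg (Bt t) (i + 1) H)ᵀ) :=
      Finset.sum_congr rfl fun l _ => hkron l
    rw [hsum, Matrix.add_mulVec, _root_.sum_mulVec, Pi.add_apply, Finset.sum_apply,
      kron_mulVec_apply]
    have hterm : ∀ l ∈ Finset.range H,
        (((((Bseg (Bt t) 0 l)ᵀ * Bseg (Bt t) 0 l) ⊗ₖ
          ((Wt t * Bseg (Bt t) (l + 1) H) * (Wt t * Bseg (Bt t) (l + 1) H)ᵀ)).mulVec
            (vecM grad)) p)
        = ((Wt t * Bseg (Bt t) (l + 1) H) * (Wt t * Bseg (Bt t) (l + 1) H)ᵀ * grad *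
            ((Bseg (Bt t) 0 l)ᵀ * Bseg (Bt t) 0 l)ᵀ) p.2 p.1 :=
      fun l _ => kron_mulVec_apply _ _ _ p
    rw [Finset.sum_congr rfl hterm, hDseg]
    simp only [Matrix.neg_mul, Matrix.one_mul, Matrix.neg_apply, Matrix.add_apply,
      Matrix.sum_apply, Finset.sum_neg_distrib, neg_add]
    congr 1
    rw [Matrix.transpose_mul, Matrix.transpose_transpose, ← Matrix.mul_assoc]
  rw [hval]
  exact hZ p.2 p.1


end
end
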